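/- Let H be a separable complex Hilbert space and let A be a C*-subalgebra of B(H) containing the identity operator. Then there exists a countable subset Q of the closed unit ball of A with the following property: for all vectors ξ, θ ∈ H, if ⟨ξ, a θ⟩ = 0 for every operator a belonging to the smallest norm-closed star-subalgebra of B(H) that contains Q and the identity operator, then ⟨ξ, B θ⟩ = 0 for every operator B in the closure of A with respect to the strong operator topology. -/

import Mathlib

/-- If the norm of `z` is at most `C * ε` for every `ε > 0` (with `C ≥ 0`), then `z = 0`. -/
lemma norm_le_mul_eps_zero {z : ℂ} {C : ℝ} (hC : 0 ≤ C)
    (h : ∀ ε > (0 : ℝ), ‖z‖ ≤ C * ε) : z = 0 := by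
  have hz : ‖z‖ ≤ 0 := by
    refine le_of_forall_pos_le_add fun ε hε => ?_
    have := h (ε / (C + 1)) (by positivity)
    have h2 : C * (ε / (C + 1)) ≤ ε := by
      rw [mul_div_assoc'] at *
      rw [div_le_iff₀ (by positivity)]
      nlinarith
    linarith
  simpa using le_antisymm hz (norm_nonneg z)

/-- Key intermediate claim of the Appendix Lemma: there is a countable subset Q of the
closed unit ball of A such that any vector functional ω_{ξ,θ} annihilating the smallest
norm-closed unital *-subalgebra generated by Q annihilates the strong-operator closure
of A as well. -/
theorem vector_functional_annihilation
    {H : Type*} [NormedAddCommGroup H] [InnerProductSpace ℂ H] [CompleteSpace H]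
    [TopologicalSpace.SeparableSpace H]
    (A : StarSubalgebra ℂ (H →L[ℂ] H)) (hA : IsClosed (A : Set (H →L[ℂ] H))) :
    ∃ Q : Set (H →L[ℂ] H),
      Q.Countable ∧
      Q ⊆ {a : H →L[ℂ] H | a ∈ A ∧ ‖a‖ ≤ 1} ∧
      ∀ ξ θ : H,
        (∀ a ∈ (StarAlgebra.adjoin ℂ Q).topologicalClosure,
          (inner ℂ ξ (a θ) : ℂ) = 0) →
        ∀ B : H →L[ℂ] H,
          (∀ ε > (0 : ℝ), ∀ (n : ℕ) (x : Fin n → H),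
            ∃ a ∈ A, ∀ i : Fin n, ‖(B - a) (x i)‖ < ε) →
          (inner ℂ ξ (B θ) : ℂ) = 0 := by
  classical
  obtain ⟨u, hu⟩ := TopologicalSpace.exists_dense_seq H
  set S : Set (H →L[ℂ] H) := {a | a ∈ A ∧ ‖a‖ ≤ 1} with hS
  let f : S → (ℕ → H) := fun a n => (a : H →L[ℂ] H) (u n)
  obtain ⟨t, tcount, tdense⟩ := TopologicalSpace.exists_countable_dense (Set.range f)
  let pick : Set.range f → S := fun y => Classical.choose y.2
  have pick_spec : ∀ y : Set.range f, f (pick y) = (y : ℕ → H) :=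
    fun y => Classical.choose_spec y.2
  refine ⟨(fun y => ((pick y : S) : H →L[ℂ] H)) '' t, tcount.image _, ?_, ?_⟩
  · rintro q ⟨y, -, rfl⟩
    exact (pick y).2
  intro ξ θ hann B hB
  -- every element of Q is annihilated
  have hQ : ∀ y ∈ t, (inner ℂ ξ (((pick y : S) : H →L[ℂ] H) θ) : ℂ) = 0 := by
    intro y hy
    exact hann _ (StarSubalgebra.le_topologicalClosure _
      (StarAlgebra.subset_adjoin ℂ _ ⟨y, hy, rfl⟩))
  -- density: approximate any a ∈ S at any u n by an element of Q
  have hdense : ∀ (a : S) (n : ℕ) (ε : ℝ), 0 < ε →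
      ∃ y ∈ t, ‖((pick y : S) : H →L[ℂ] H) (u n) - (a : H →L[ℂ] H) (u n)‖ < ε := by
    intro a n ε hε
    have hp : (⟨f a, Set.mem_range_self a⟩ : Set.range f) ∈ closure t := tdense _
    have hcont : Continuous fun y : Set.range f => ‖(y : ℕ → H) n - f a n‖ :=
      (((continuous_apply n).comp continuous_subtype_val).sub continuous_const).norm
    have hopen : IsOpen {y : Set.range f | ‖(y : ℕ → H) n - f a n‖ < ε} :=
      isOpen_lt hcont continuous_const
    obtain ⟨y, hyV, hyt⟩ := (mem_closure_iff.mp hp) _ hopen (by simp [hε])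
    refine ⟨y, hyt, ?_⟩
    have := pick_spec y
    have h1 : ((pick y : S) : H →L[ℂ] H) (u n) = (y : ℕ → H) n := congrFun this n
    simpa [h1] using hyV
  -- step 1: annihilation on the unit ball of A
  have hball : ∀ a : S, (inner ℂ ξ ((a : H →L[ℂ] H) θ) : ℂ) = 0 := by
    intro a
    refine norm_le_mul_eps_zero (C := 3 * ‖ξ‖) (by positivity) ?_
    intro ε hε
    obtain ⟨n, hn⟩ := Metric.denseRange_iff.mp hu θ ε hε
    obtain ⟨y, hyt, hyε⟩ := hdense a n ε hε
    set q : H →L[ℂ] H := ((pick y : S) : H →L[ℂ] H) with hq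
    have hq0 : (inner ℂ ξ (q θ) : ℂ) = 0 := hQ y hyt
    have key : (inner ℂ ξ ((a : H →L[ℂ] H) θ) : ℂ)
        = inner ℂ ξ ((a : H →L[ℂ] H) θ - q θ) := by
      rw [inner_sub_right, hq0, sub_zero]
    rw [key]
    have hbound : ‖(a : H →L[ℂ] H) θ - q θ‖ ≤ 3 * ε := by
      have h1 : ‖(a : H →L[ℂ] H) θ - (a : H →L[ℂ] H) (u n)‖ ≤ ε := by
        rw [← map_sub]
        calc ‖(a : H →L[ℂ] H) (θ - u n)‖ ≤ ‖(a : H →L[ℂ] H)‖ * ‖θ - u n‖ :=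
              (a : H →L[ℂ] H).le_opNorm _
          _ ≤ 1 * ε := by
              apply mul_le_mul a.2.2 (by rw [dist_eq_norm] at hn; linarith)
                (norm_nonneg _) zero_le_one
          _ = ε := one_mul ε
      have h3 : ‖q (u n) - q θ‖ ≤ ε := by
        rw [← map_sub]
        calc ‖q (u n - θ)‖ ≤ ‖q‖ * ‖u n - θ‖ := q.le_opNorm _
          _ ≤ 1 * ε := by
              apply mul_le_mul (pick y).2.2 ?_ (norm_nonneg _) zero_le_one
              rw [norm_sub_rev]
              rw [dist_eq_norm] at hn; linarith
          _ = ε := one_mul ε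
      calc ‖(a : H →L[ℂ] H) θ - q θ‖
          ≤ ‖(a : H →L[ℂ] H) θ - (a : H →L[ℂ] H) (u n)‖
            + ‖(a : H →L[ℂ] H) (u n) - q (u n)‖ + ‖q (u n) - q θ‖ := by
            have := norm_sub_le_norm_sub_add_norm_sub ((a : H →L[ℂ] H) θ) (q (u n)) (q θ)
            have := norm_sub_le_norm_sub_add_norm_sub ((a : H →L[ℂ] H) θ)
              ((a : H →L[ℂ] H) (u n)) (q (u n))
            linarith
        _ ≤ ε + ε + ε := by
            rw [norm_sub_rev] at hyε
            linarith [le_of_lt hyε]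
        _ = 3 * ε := by ring
    calc ‖(inner ℂ ξ ((a : H →L[ℂ] H) θ - q θ) : ℂ)‖
        ≤ ‖ξ‖ * ‖(a : H →L[ℂ] H) θ - q θ‖ := norm_inner_le_norm _ _
      _ ≤ ‖ξ‖ * (3 * ε) := by
          exact mul_le_mul_of_nonneg_left hbound (norm_nonneg _)
      _ = 3 * ‖ξ‖ * ε := by ring
  -- step 2: annihilation on all of A
  have hallA : ∀ a ∈ A, (inner ℂ ξ (a θ) : ℂ) = 0 := by
    intro a ha
    rcases eq_or_ne a 0 with rfl | hne
    · simp
    have hnorm : (0 : ℝ) < ‖a‖ := norm_pos_iff.mpr hne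
    set c : ℂ := (‖a‖ : ℂ)⁻¹ with hc
    have hmem : c • a ∈ A := A.smul_mem ha c
    have hle : ‖c • a‖ ≤ 1 := by
      rw [norm_smul, hc]
      simp only [norm_inv, Complex.norm_real, Real.norm_eq_abs, abs_of_pos hnorm]
      rw [inv_mul_cancel₀ (ne_of_gt hnorm)]
    have := hball ⟨c • a, hmem, hle⟩
    simp only [ContinuousLinearMap.smul_apply, inner_smul_right] at this
    have hc0 : c ≠ 0 := by
      simp [hc, ne_of_gt hnorm]
    exact (mul_eq_zero.mp this).resolve_left hc0
  -- step 3: conclude for B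
  refine norm_le_mul_eps_zero (C := ‖ξ‖) (norm_nonneg _) ?_
  intro ε hε
  obtain ⟨a, haA, ha⟩ := hB ε hε 1 (fun _ => θ)
  have h0 : ‖(B - a) θ‖ < ε := ha 0
  have key : (inner ℂ ξ (B θ) : ℂ) = inner ℂ ξ ((B - a) θ) := by
    rw [ContinuousLinearMap.sub_apply, inner_sub_right, hallA a haA, sub_zero]
  rw [key]
  calc ‖(inner ℂ ξ ((B - a) θ) : ℂ)‖ ≤ ‖ξ‖ * ‖(B - a) θ‖ := norm_inner_le_norm _ _
    _ ≤ ‖ξ‖ * ε := mul_le_mul_of_nonneg_left (le_of_lt h0) (norm_nonneg _)
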